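/- arXiv:0804.2605 — 2 statements merged into one kernel-verified Lean document; each statement's English description precedes it below -/
import Mathlib

section
/- Let $\bar A = \begin{pmatrix} 0 & 1 \\ \bar q - \lambda & 0 \end{pmatrix}$ with $\lambda \neq \bar q$, let $q : \mathbb{R} \to \mathbb{R}$, and let $A(\delta) = \begin{pmatrix} 0 & 1 \\ q(x_{0}+\delta) - \lambda & 0 \end{pmatrix}$. Then $B(\delta) = e^{-\delta\bar A}(A(\delta) - \bar A)e^{\delta\bar A} = \Delta_q(\delta)\begin{pmatrix} \delta\,\eta_0(Z_{2\delta}) & \frac{1 - \xi(Z_{2\delta})}{2(\lambda - \bar q)} \\ -\frac{1 + \xi(Z_{2\delta})}{2} & -\delta\,\eta_0(Z_{2\delta}) \end{pmatrix}$, where $\Delta_q(\delta) = \bar q - q(x_{0}+\delta)$ and $Z_{2\delta} = (\bar q - \lambda)(2\delta)^2$. -/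
open scoped Nat

noncomputable def xi (Z : ℝ) : ℝ :=
  if Z ≤ 0 then Real.cos (Real.sqrt |Z|) else Real.cosh (Real.sqrt Z)

noncomputable def eta0 (Z : ℝ) : ℝ :=
  if Z < 0 then Real.sin (Real.sqrt |Z|) / Real.sqrt |Z|
  else if Z = 0 then 1 else Real.sinh (Real.sqrt Z) / Real.sqrt Z

lemma hasSum_xi (Z : ℝ) : HasSum (fun k : ℕ => Z ^ k / ((2 * k)! : ℝ)) (xi Z) := by
  rcases le_or_gt Z 0 with h | h
  · rw [xi, if_pos h]
    have := Real.hasSum_cos (Real.sqrt |Z|)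
    convert this using 2 with k
    rw [pow_mul, Real.sq_sqrt (abs_nonneg Z), abs_of_nonpos h, ← mul_pow, neg_one_mul, neg_neg]
  · rw [xi, if_neg (not_le.mpr h)]
    have := Real.hasSum_cosh (Real.sqrt Z)
    convert this using 2 with k
    rw [pow_mul, Real.sq_sqrt h.le]

lemma hasSum_eta0 (Z : ℝ) : HasSum (fun k : ℕ => Z ^ k / ((2 * k + 1)! : ℝ)) (eta0 Z) := by
  rcases lt_trichotomy Z 0 with h | h | h
  · rw [eta0, if_pos h]
    set y := Real.sqrt |Z| with hy
    have hy0 : 0 < y := Real.sqrt_pos.mpr (abs_pos.mpr h.ne)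
    have := (Real.hasSum_sin y).div_const y
    convert this using 2 with k
    case e'_3 => rfl
    rw [pow_succ, pow_mul, Real.sq_sqrt (abs_nonneg Z), abs_of_neg h]
    have hzz : (-1:ℝ) ^ k * (-Z) ^ k = Z ^ k := by rw [← mul_pow, neg_one_mul, neg_neg]
    rw [show ((-1):ℝ) ^ k * ((-Z) ^ k * y) = Z ^ k * y from by rw [← mul_assoc, hzz]]
    field_simp
  · subst h
    rw [eta0, if_neg (lt_irrefl 0), if_pos rfl]
    have h0 : ∀ (b : ℕ), b ≠ 0 → (0:ℝ) ^ b / ((2 * b + 1)! : ℝ) = 0 := by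
      intro b hb
      simp [zero_pow hb]
    have := hasSum_single (f := fun k : ℕ => (0:ℝ) ^ k / ((2 * k + 1)! : ℝ)) 0 h0
    simpa using this
  · rw [eta0, if_neg (not_lt.mpr h.le), if_neg h.ne']
    set y := Real.sqrt Z with hy
    have hy0 : 0 < y := Real.sqrt_pos.mpr h
    have := (Real.hasSum_sinh y).div_const y
    convert this using 2 with k
    case e'_3 => rfl
    rw [pow_succ, pow_mul, Real.sq_sqrt h.le]
    field_simp

lemma sqrt_four_mul (a : ℝ) (_ha : 0 ≤ a) : Real.sqrt (4 * a) = 2 * Real.sqrt a := by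
  rw [show (4:ℝ) = 2 ^ 2 by norm_num, Real.sqrt_mul (by positivity), Real.sqrt_sq (by norm_num)]

lemma xi_mul_eta0 (Z : ℝ) : xi Z * eta0 Z = eta0 (4 * Z) := by
  rcases lt_trichotomy Z 0 with h | h | h
  · have h4 : 4 * Z < 0 := by linarith
    have habs : |4 * Z| = 4 * |Z| := by rw [abs_mul]; norm_num
    rw [xi, if_pos h.le, eta0, if_pos h, eta0, if_pos h4, habs,
      sqrt_four_mul _ (abs_nonneg Z), Real.sin_two_mul]
    have hy : (0:ℝ) < Real.sqrt |Z| := Real.sqrt_pos.mpr (abs_pos.mpr h.ne)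
    field_simp
  · subst h
    simp [xi, eta0]
  · have h4 : (0:ℝ) < 4 * Z := by linarith
    rw [xi, if_neg (not_le.mpr h), eta0, if_neg (not_lt.mpr h.le), if_neg h.ne',
      eta0, if_neg (not_lt.mpr h4.le), if_neg h4.ne',
      sqrt_four_mul _ h.le, Real.sinh_two_mul]
    have hy : (0:ℝ) < Real.sqrt Z := Real.sqrt_pos.mpr h
    field_simp

lemma xi_sq (Z : ℝ) : xi Z ^ 2 = (1 + xi (4 * Z)) / 2 := by
  rcases lt_trichotomy Z 0 with h | h | h
  · have h4 : 4 * Z < 0 := by linarith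
    have habs : |4 * Z| = 4 * |Z| := by rw [abs_mul]; norm_num
    rw [xi, if_pos h.le, xi, if_pos h4.le, habs, sqrt_four_mul _ (abs_nonneg Z),
      Real.cos_sq]
    ring
  · subst h
    simp [xi]
  · have h4 : (0:ℝ) < 4 * Z := by linarith
    rw [xi, if_neg (not_le.mpr h), xi, if_neg (not_le.mpr h4),
      sqrt_four_mul _ h.le, Real.cosh_two_mul, Real.sinh_sq]
    ring

lemma Z_mul_eta0_sq (Z : ℝ) : Z * eta0 Z ^ 2 = (xi (4 * Z) - 1) / 2 := by
  rcases lt_trichotomy Z 0 with h | h | h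
  · have h4 : 4 * Z < 0 := by linarith
    have habs : |4 * Z| = 4 * |Z| := by rw [abs_mul]; norm_num
    have hy : (0:ℝ) < Real.sqrt |Z| := Real.sqrt_pos.mpr (abs_pos.mpr h.ne)
    have hy2 : Real.sqrt |Z| ^ 2 = -Z := by
      rw [Real.sq_sqrt (abs_nonneg Z), abs_of_neg h]
    rw [eta0, if_pos h, xi, if_pos h4.le, habs, sqrt_four_mul _ (abs_nonneg Z),
      Real.cos_two_mul, Real.cos_sq']
    have key : Z * (Real.sin (Real.sqrt |Z|) / Real.sqrt |Z|) ^ 2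
        = - Real.sin (Real.sqrt |Z|) ^ 2 := by
      rw [div_pow, hy2, div_neg, mul_neg, mul_div_cancel₀ _ h.ne]
    rw [key]
    ring
  · subst h
    simp [xi, eta0]
  · have h4 : (0:ℝ) < 4 * Z := by linarith
    have hy : (0:ℝ) < Real.sqrt Z := Real.sqrt_pos.mpr h
    have hy2 : Real.sqrt Z ^ 2 = Z := Real.sq_sqrt h.le
    rw [eta0, if_neg (not_lt.mpr h.le), if_neg h.ne', xi, if_neg (not_le.mpr h4),
      sqrt_four_mul _ h.le, Real.cosh_two_mul, Real.cosh_sq]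
    have key : Z * (Real.sinh (Real.sqrt Z) / Real.sqrt Z) ^ 2
        = Real.sinh (Real.sqrt Z) ^ 2 := by
      rw [div_pow, hy2]
      field_simp
    rw [key]
    ring

lemma exp_key (μ t : ℝ) (X : Matrix (Fin 2) (Fin 2) ℝ)
    (hX : X ^ 2 = μ • (1 : Matrix (Fin 2) (Fin 2) ℝ)) :
    NormedSpace.exp (t • X) = xi (μ * t ^ 2) • (1 : Matrix (Fin 2) (Fin 2) ℝ)
      + (t * eta0 (μ * t ^ 2)) • X := by
  letI : SeminormedRing (Matrix (Fin 2) (Fin 2) ℝ) := Matrix.linftyOpSemiNormedRing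
  letI : NormedRing (Matrix (Fin 2) (Fin 2) ℝ) := Matrix.linftyOpNormedRing
  letI : NormedAlgebra ℝ (Matrix (Fin 2) (Fin 2) ℝ) := Matrix.linftyOpNormedAlgebra
  rw [NormedSpace.exp_eq_tsum (𝕂 := ℝ)]
  refine (HasSum.even_add_odd ?_ ?_).tsum_eq
  · have h1 : ∀ k : ℕ, ((((2 * k)! : ℕ) : ℝ)⁻¹) • (t • X) ^ (2 * k)
        = ((μ * t ^ 2) ^ k / ((2 * k)! : ℝ)) • (1 : Matrix (Fin 2) (Fin 2) ℝ) := by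
      intro k
      rw [smul_pow, pow_mul X, hX, smul_pow, one_pow, smul_smul, smul_smul]
      congr 1
      rw [mul_pow, pow_mul]
      ring
    simp only [h1]
    exact (hasSum_xi (μ * t ^ 2)).smul_const _
  · have h2 : ∀ k : ℕ, ((((2 * k + 1)! : ℕ) : ℝ)⁻¹) • (t • X) ^ (2 * k + 1)
        = (t * ((μ * t ^ 2) ^ k / ((2 * k + 1)! : ℝ))) • X := by
      intro k
      rw [smul_pow, pow_succ X, pow_mul X, hX, smul_pow, one_pow, smul_mul_assoc, one_mul,
        smul_smul, smul_smul]
      congr 1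
      rw [mul_pow, pow_succ, pow_mul]
      ring
    simp only [h2]
    exact ((hasSum_eta0 (μ * t ^ 2)).mul_left t).smul_const _

theorem modified_B_explicit
    (qbar lam x0 δ : ℝ) (hne : lam ≠ qbar) (q : ℝ → ℝ)
    (Abar : Matrix (Fin 2) (Fin 2) ℝ) (hAbar : Abar = !![0, 1; qbar - lam, 0])
    (A : ℝ → Matrix (Fin 2) (Fin 2) ℝ)
    (hA : ∀ s : ℝ, A s = !![0, 1; q (x0 + s) - lam, 0])
    (Δq : ℝ → ℝ) (hΔq : ∀ s : ℝ, Δq s = qbar - q (x0 + s))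
    (Z2δ : ℝ) (hZ : Z2δ = (qbar - lam) * (2 * δ) ^ 2) :
    NormedSpace.exp (-(δ • Abar)) * (A δ - Abar) * NormedSpace.exp (δ • Abar) =
      Δq δ • !![δ * eta0 Z2δ, (1 - xi Z2δ) / (2 * (lam - qbar));
                -((1 + xi Z2δ) / 2), -(δ * eta0 Z2δ)] := by
  have hμ : qbar - lam ≠ 0 := sub_ne_zero.mpr hne.symm
  have hX : Abar ^ 2 = (qbar - lam) • (1 : Matrix (Fin 2) (Fin 2) ℝ) := by
    subst hAbar
    ext i j
    fin_cases i <;> fin_cases j <;>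
      simp [pow_two, Matrix.mul_apply, Fin.sum_univ_two, Matrix.one_apply]
  have hZ4 : Z2δ = 4 * ((qbar - lam) * δ ^ 2) := by rw [hZ]; ring
  have he1 := exp_key (qbar - lam) δ Abar hX
  have he2 := exp_key (qbar - lam) (-δ) Abar hX
  rw [neg_sq] at he2
  rw [show -(δ • Abar) = (-δ) • Abar by rw [neg_smul], he1, he2]
  have id1 : xi ((qbar - lam) * δ ^ 2) * eta0 ((qbar - lam) * δ ^ 2) = eta0 Z2δ := by
    rw [hZ4]; exact xi_mul_eta0 _
  have id2 : xi ((qbar - lam) * δ ^ 2) ^ 2 = (1 + xi Z2δ) / 2 := by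
    rw [hZ4]; exact xi_sq _
  have id3 : (qbar - lam) * δ ^ 2 * eta0 ((qbar - lam) * δ ^ 2) ^ 2 = (xi Z2δ - 1) / 2 := by
    rw [hZ4]; exact Z_mul_eta0_sq _
  set c : ℝ := xi ((qbar - lam) * δ ^ 2) with hc
  set e : ℝ := eta0 ((qbar - lam) * δ ^ 2) with he
  rw [hA, hAbar, hΔq]
  ext i j
  fin_cases i <;> fin_cases j <;>
    simp [Matrix.mul_apply, Fin.sum_univ_two, Matrix.one_apply]
  · linear_combination ((qbar - q (x0 + δ)) * δ) * id1
  · have h2 : (2 : ℝ) * (lam - qbar) ≠ 0 := by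
      intro hcon; apply hμ; linarith
    field_simp
    linear_combination (-2 * (qbar - q (x0 + δ))) * id3
  · linear_combination (q (x0 + δ) - qbar) * id2
  · linear_combination (-((qbar - q (x0 + δ)) * δ)) * id1
end

section
/- The commutator of $B(\delta_2)$ and $B(\delta_1)$ for the modified Schrödinger system decomposes as $[B(\delta_2), B(\delta_1)] = 2\Delta_q(\delta_1)\Delta_q(\delta_2)\left(K_1(\delta_1,\delta_2)U_1 + K_2(\delta_1,\delta_2)U_2 + K_3(\delta_1,\delta_2)U_3\right)$, where $K_1(x,y) = y\,\eta_0(Z_{2y}) - x\,\eta_0(Z_{2x})$, $K_2(x,y) = \xi(Z_{2x}) - \xi(Z_{2y})$, $K_3(x,y) = (x-y)\,\eta_0(Z_{2(x-y)})$, and $U_1 = \begin{pmatrix} 0 & \frac{1}{2(\lambda-\bar q)} \\ \frac12 & 0\end{pmatrix}$, $U_2 = \begin{pmatrix} -\frac{1}{4(\lambda - \bar q)} & 0 \\ 0 & \frac{1}{4(\lambda-\bar q)} \end{pmatrix}$, $U_3 = \begin{pmatrix} 0 & \frac{1}{2(\lambda-\bar q)} \\ -\frac12 & 0 \end{pmatrix}$.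 -/
lemma xi_neg_form (w t : ℝ) (hw : 0 < w) :
    xi (-(4 * w ^ 2 * t ^ 2)) = Real.cos (2 * w * t) := by
  have h0 : -(4 * w ^ 2 * t ^ 2) ≤ 0 := neg_nonpos.mpr (by positivity)
  have habs : |(-(4 * w ^ 2 * t ^ 2))| = (2 * w * |t|) ^ 2 := by
    rw [abs_of_nonpos h0, neg_neg, mul_pow, mul_pow, sq_abs]; ring
  rw [xi, if_pos h0, habs, Real.sqrt_sq (by positivity)]
  rcases abs_choice t with h | h
  · rw [h]
  · rw [h]; rw [show 2 * w * -t = -(2 * w * t) by ring, Real.cos_neg]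

lemma eta_neg_form (w t : ℝ) (hw : 0 < w) :
    t * eta0 (-(4 * w ^ 2 * t ^ 2)) = Real.sin (2 * w * t) / (2 * w) := by
  rcases eq_or_ne t 0 with rfl | ht
  · simp
  have h0 : -(4 * w ^ 2 * t ^ 2) < 0 := by
    have : 0 < 4 * w ^ 2 * t ^ 2 := by positivity
    linarith
  have habs : |(-(4 * w ^ 2 * t ^ 2))| = (2 * w * |t|) ^ 2 := by
    rw [abs_of_nonpos h0.le, neg_neg, mul_pow, mul_pow, sq_abs]; ring
  rw [eta0, if_pos h0, habs, Real.sqrt_sq (by positivity)]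
  rcases abs_choice t with h | h
  · rw [h]; field_simp
  · rw [h]; rw [show 2 * w * -t = -(2 * w * t) by ring, Real.sin_neg]
    have ht' : t < 0 := by
      rcases lt_or_gt_of_ne ht with h' | h'
      · exact h'
      · exfalso; nlinarith [abs_nonneg t, h]
    field_simp

lemma xi_pos_form (w t : ℝ) (hw : 0 < w) :
    xi (4 * w ^ 2 * t ^ 2) = Real.cosh (2 * w * t) := by
  rcases eq_or_ne t 0 with rfl | ht
  · simp [xi]
  have h0 : ¬ (4 * w ^ 2 * t ^ 2 ≤ 0) := by push_neg; positivity
  have hsq : (4 * w ^ 2 * t ^ 2) = (2 * w * |t|) ^ 2 := by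
    rw [mul_pow, mul_pow, sq_abs]; ring
  rw [xi, if_neg h0, hsq, Real.sqrt_sq (by positivity)]
  rcases abs_choice t with h | h
  · rw [h]
  · rw [h]; rw [show 2 * w * -t = -(2 * w * t) by ring, Real.cosh_neg]

lemma eta_pos_form (w t : ℝ) (hw : 0 < w) :
    t * eta0 (4 * w ^ 2 * t ^ 2) = Real.sinh (2 * w * t) / (2 * w) := by
  rcases eq_or_ne t 0 with rfl | ht
  · simp
  have hpos : 0 < 4 * w ^ 2 * t ^ 2 := by positivity
  have hsq : (4 * w ^ 2 * t ^ 2) = (2 * w * |t|) ^ 2 := by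
    rw [mul_pow, mul_pow, sq_abs]; ring
  rw [eta0, if_neg (not_lt.mpr hpos.le), if_neg hpos.ne', hsq,
    Real.sqrt_sq (by positivity)]
  rcases abs_choice t with h | h
  · rw [h]; field_simp
  · rw [h]; rw [show 2 * w * -t = -(2 * w * t) by ring, Real.sinh_neg]
    have ht' : t < 0 := by
      rcases lt_or_gt_of_ne ht with h' | h'
      · exact h'
      · exfalso; nlinarith [abs_nonneg t, h]
    field_simp

lemma key (μ : ℝ) (hμ : μ ≠ 0) (x y : ℝ) :
    x * eta0 (μ * (2 * x) ^ 2) * xi (μ * (2 * y) ^ 2)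
      - y * eta0 (μ * (2 * y) ^ 2) * xi (μ * (2 * x) ^ 2)
      = (x - y) * eta0 (μ * (2 * (x - y)) ^ 2) := by
  rcases lt_or_gt_of_ne hμ with hμ' | hμ'
  · set w := Real.sqrt (-μ) with hw
    have hwpos : 0 < w := Real.sqrt_pos.mpr (by linarith)
    have hw2 : w ^ 2 = -μ := Real.sq_sqrt (by linarith)
    have harg : ∀ t : ℝ, μ * (2 * t) ^ 2 = -(4 * w ^ 2 * t ^ 2) := by
      intro t; rw [hw2]; ring
    rw [harg x, harg y, harg (x - y), xi_neg_form w x hwpos, xi_neg_form w y hwpos,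
      eta_neg_form w x hwpos, eta_neg_form w y hwpos, eta_neg_form w (x - y) hwpos,
      show 2 * w * (x - y) = 2 * w * x - 2 * w * y by ring, Real.sin_sub]
    field_simp
  · set w := Real.sqrt μ with hw
    have hwpos : 0 < w := Real.sqrt_pos.mpr (by linarith)
    have hw2 : w ^ 2 = μ := Real.sq_sqrt (by linarith)
    have harg : ∀ t : ℝ, μ * (2 * t) ^ 2 = 4 * w ^ 2 * t ^ 2 := by
      intro t; rw [hw2]; ring
    rw [harg x, harg y, harg (x - y), xi_pos_form w x hwpos, xi_pos_form w y hwpos,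
      eta_pos_form w x hwpos, eta_pos_form w y hwpos, eta_pos_form w (x - y) hwpos,
      show 2 * w * (x - y) = 2 * w * x - 2 * w * y by ring, Real.sinh_sub]
    field_simp

theorem commutator_B_decomposition
    (qbar lam x0 : ℝ) (hne : lam ≠ qbar) (q : ℝ → ℝ)
    (Δq : ℝ → ℝ) (hΔq : ∀ s : ℝ, Δq s = qbar - q (x0 + s))
    (Z : ℝ → ℝ) (hZ : ∀ γ : ℝ, Z γ = (qbar - lam) * γ ^ 2)
    (B : ℝ → Matrix (Fin 2) (Fin 2) ℝ)
    (hB : ∀ δ : ℝ, B δ =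
      Δq δ • !![δ * eta0 (Z (2 * δ)), (1 - xi (Z (2 * δ))) / (2 * (lam - qbar));
                -((1 + xi (Z (2 * δ))) / 2), -(δ * eta0 (Z (2 * δ)))])
    (K1 K2 K3 : ℝ → ℝ → ℝ)
    (hK1 : ∀ x y : ℝ, K1 x y = y * eta0 (Z (2 * y)) - x * eta0 (Z (2 * x)))
    (hK2 : ∀ x y : ℝ, K2 x y = xi (Z (2 * x)) - xi (Z (2 * y)))
    (hK3 : ∀ x y : ℝ, K3 x y = (x - y) * eta0 (Z (2 * (x - y))))
    (U1 U2 U3 : Matrix (Fin 2) (Fin 2) ℝ)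
    (hU1 : U1 = !![0, 1 / (2 * (lam - qbar)); 1 / 2, 0])
    (hU2 : U2 = !![-(1 / (4 * (lam - qbar))), 0; 0, 1 / (4 * (lam - qbar))])
    (hU3 : U3 = !![0, 1 / (2 * (lam - qbar)); -(1 / 2), 0])
    (δ1 δ2 : ℝ) :
    B δ2 * B δ1 - B δ1 * B δ2 =
      (2 * Δq δ1 * Δq δ2) •
        (K1 δ1 δ2 • U1 + K2 δ1 δ2 • U2 + K3 δ1 δ2 • U3) := by
  have hμ : qbar - lam ≠ 0 := sub_ne_zero.mpr (Ne.symm hne)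
  have hden : lam - qbar ≠ 0 := sub_ne_zero.mpr hne
  have hkey : δ1 * eta0 (Z (2 * δ1)) * xi (Z (2 * δ2))
      - δ2 * eta0 (Z (2 * δ2)) * xi (Z (2 * δ1))
      = (δ1 - δ2) * eta0 (Z (2 * (δ1 - δ2))) := by
    rw [hZ, hZ, hZ]; exact key (qbar - lam) hμ δ1 δ2
  have hK3' : K3 δ1 δ2 = δ1 * eta0 (Z (2 * δ1)) * xi (Z (2 * δ2))
      - δ2 * eta0 (Z (2 * δ2)) * xi (Z (2 * δ1)) := (hK3 δ1 δ2).trans hkey.symm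
  rw [hB, hB, hK1, hK2, hK3', hU1, hU2, hU3]
  ext i j
  fin_cases i <;> fin_cases j <;>
    simp only [Matrix.mul_apply, Matrix.smul_apply, Matrix.add_apply,
      Matrix.sub_apply, Fin.sum_univ_two, smul_eq_mul, Fin.isValue,
      Matrix.cons_val', Matrix.cons_val_zero, Matrix.cons_val_one,
      Matrix.head_cons, Matrix.empty_val', Matrix.cons_val_fin_one,
      Matrix.head_fin_const, Fin.zero_eta, Fin.mk_one, Matrix.of_apply] <;>
    field_simp <;>
    ring
end
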